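/- There is no group G of order 35 together with an action of G on a set of 121 points such that every element of order 5 in G fixes exactly 1 point and every element of order 7 in G fixes exactly 2 points. -/

import Mathlib

theorem stmt_7 (G : Type*) [Group G] [Fintype G] (hG : Fintype.card G = 35)
    [MulAction G (Fin 121)]
    (h5 : ∀ g : G, orderOf g = 5 →
      (Finset.univ.filter fun x : Fin 121 => g • x = x).card = 1)
    (h7 : ∀ g : G, orderOf g = 7 →
      (Finset.univ.filter fun x : Fin 121 => g • x = x).card = 2) :
    False := by
  have hcard : Nat.card G = 35 := by simp [Nat.card_eq_fintype_card, hG]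
  haveI : Fact (Nat.Prime 7) := ⟨by norm_num⟩
  haveI : Fact (Nat.Prime 5) := ⟨by norm_num⟩
  obtain ⟨b, hb⟩ := exists_prime_orderOf_dvd_card 7 (by rw [hG]; norm_num)
  obtain ⟨a, ha⟩ := exists_prime_orderOf_dvd_card 5 (by rw [hG]; norm_num)
  obtain ⟨P⟩ : Nonempty (Sylow 7 G) := Sylow.nonempty
  have hPcard : Nat.card P = 7 := by
    rw [Sylow.card_eq_multiplicity, hcard,
      show (35:ℕ) = 5 * 7 by norm_num, Nat.factorization_mul (by norm_num) (by norm_num)]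
    simp [Nat.Prime.factorization (by norm_num : Nat.Prime 5),
      Nat.Prime.factorization (by norm_num : Nat.Prime 7)]
  -- Sylow 7 is unique
  have hindex : (P : Subgroup G).index = 5 := by
    have := Subgroup.card_mul_index (P : Subgroup G)
    rw [hPcard, hcard] at this
    omega
  have hdvd : Nat.card (Sylow 7 G) ∣ 5 := hindex ▸ P.card_dvd_index
  have hmod : Nat.card (Sylow 7 G) % 7 = 1 := card_sylow_modEq_one 7 G
  have hone : Nat.card (Sylow 7 G) = 1 := by
    rcases (Nat.Prime.eq_one_or_self_of_dvd (by norm_num) _ hdvd) with h | h <;> omega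
  haveI : Subsingleton (Sylow 7 G) := (Nat.card_eq_one_iff_unique.mp hone).1
  -- P is normal
  haveI hnorm : (P : Subgroup G).Normal := by
    rw [← Subgroup.normalizer_eq_top_iff]
    rw [eq_top_iff]
    intro g _
    refine Sylow.smul_eq_iff_mem_normalizer.mp ?_
    exact Subsingleton.elim _ _
  -- b ∈ P
  have hbP : b ∈ (P : Subgroup G) := by
    have hpg : IsPGroup 7 (Subgroup.zpowers b) := by
      apply IsPGroup.of_card (n := 1)
      rw [Nat.card_zpowers, hb]; norm_num
    obtain ⟨Q, hQ⟩ := hpg.exists_le_sylow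
    have : Q = P := Subsingleton.elim _ _
    exact this ▸ hQ (Subgroup.mem_zpowers b)
  -- conjugation by a is trivial on P
  have hconj : MulAut.conjNormal (H := (P : Subgroup G)) a = 1 := by
    have h1 : orderOf (MulAut.conjNormal (H := (P : Subgroup G)) a) ∣ 5 :=
      ha ▸ orderOf_map_dvd _ a
    have h2 : orderOf (MulAut.conjNormal (H := (P : Subgroup G)) a) ∣ 6 := by
      haveI : IsCyclic (P : Subgroup G) := isCyclic_of_prime_card hPcard
      haveI : Finite (P : Subgroup G) := Nat.finite_of_card_ne_zero (by omega)
      have := orderOf_dvd_natCard (MulAut.conjNormal (H := (P : Subgroup G)) a)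
      rwa [IsCyclic.card_mulAut, hPcard] at this
    have : orderOf (MulAut.conjNormal (H := (P : Subgroup G)) a) ∣ 1 :=
      Nat.dvd_gcd h1 h2
    rwa [Nat.dvd_one, orderOf_eq_one_iff] at this
  have hcomm : a * b = b * a := by
    have := congrArg (fun f => ((f ⟨b, hbP⟩ : (P : Subgroup G)) : G)) hconj
    simp only [MulAut.conjNormal_apply, MulAut.one_apply] at this
    calc a * b = (a * b * a⁻¹) * a := by group
    _ = b * a := by rw [this]
  -- fixed point sets
  set S := Finset.univ.filter fun x : Fin 121 => b • x = x with hS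
  have hScard : S.card = 2 := h7 b hb
  have hmapS : ∀ y ∈ S, a • y ∈ S := by
    intro y hy
    simp only [hS, Finset.mem_filter, Finset.mem_univ, true_and] at hy ⊢
    rw [← mul_smul, ← hcomm, mul_smul, hy]
  obtain ⟨y1, y2, hne, hSeq⟩ := Finset.card_eq_two.mp hScard
  have hfix : ∀ y ∈ S, a • y = y := by
    intro y hy
    by_contra hne'
    -- a • y ∈ S, a • y ≠ y, so S = {y, a • y} and a • (a • y) = y
    have h1 : a • y ∈ S := hmapS y hy
    have h2 : a • (a • y) ∈ S := hmapS _ h1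
    have key : a • (a • y) = y := by
      rw [hSeq] at hy h1 h2
      simp only [Finset.mem_insert, Finset.mem_singleton] at hy h1 h2
      have hinj : a • y ≠ a • (a • y) := fun h => hne' (smul_left_cancel a h).symm
      rcases hy with rfl | rfl <;> rcases h1 with h1 | h1 <;>
        rcases h2 with h2 | h2 <;> omega
    have h6 : a ^ 2 • y = y := by rw [pow_two, mul_smul, key]
    have h5' : a ^ 5 • y = y := by
      rw [← ha, pow_orderOf_eq_one, one_smul]
    have : a • y = y := by
      have e6 : (a ^ 2) ^ 3 • y = y := by
        rw [pow_succ, mul_smul, h6, pow_two, mul_smul, h6, h6]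
      have : a ^ 6 • y = y := by rw [show (6:ℕ) = 2*3 by norm_num, pow_mul]; exact e6
      rw [show (6:ℕ) = 1 + 5 by norm_num, pow_add, pow_one, mul_smul, h5'] at this
      exact this
    exact hne' this
  -- both y1 y2 fixed by a, contradicting card = 1
  have hTcard := h5 a ha
  have hsub : ({y1, y2} : Finset (Fin 121)) ⊆
      Finset.univ.filter fun x : Fin 121 => a • x = x := by
    intro y hy
    simp only [Finset.mem_insert, Finset.mem_singleton] at hy
    have hyS : y ∈ S := by rw [hSeq]; simpa using hy
    simp only [Finset.mem_filter, Finset.mem_univ, true_and]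
    exact hfix y hyS
  have := Finset.card_le_card hsub
  rw [hTcard, Finset.card_insert_of_notMem (by simpa using hne),
    Finset.card_singleton] at this
  omega
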